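/- Let h : Q → P be a homomorphism of commutative monoids with Q finitely generated and P cancellative. If P is a finitely generated Q-module via h, then P is finitely generated as a monoid (hence fine) and h is dense: for every p ∈ P there exists an integer n > 0 with n • p in the image of h. -/

import Mathlib

/-- If `h : Q → P` is a homomorphism of commutative monoids with `Q` finitely generated
and `P` cancellative (integral), and `P` is a finitely generated `Q`-module via `h`,
then `P` is a finitely generated monoid (hence fine) and `h` is dense. -/
theorem fg_and_dense_of_finite_module
    (Q P : Type*) [AddCommMonoid Q] [AddCommMonoid P] [IsCancelAdd P]
    (hQ : AddMonoid.FG Q) (h : Q →+ P)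
    (S : Finset P) (hS : ∀ p : P, ∃ q : Q, ∃ s ∈ S, p = h q + s) :
    AddMonoid.FG P ∧ ∀ p : P, ∃ n : ℕ, 0 < n ∧ n • p ∈ Set.range h := by
  obtain ⟨T, hT⟩ := AddMonoid.fg_def.mp hQ
  constructor
  · -- P is generated by h '' T ∪ S
    classical
    rw [AddMonoid.fg_def]
    refine ⟨T.image h ∪ S, ?_⟩
    rw [eq_top_iff]
    intro p _
    obtain ⟨q, s, hsS, rfl⟩ := hS p
    have hq : h q ∈ AddSubmonoid.closure ((h : Q → P) '' ↑T) := by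
      rw [← AddMonoidHom.map_mclosure, hT]
      exact ⟨q, trivial, rfl⟩
    refine AddSubmonoid.add_mem _ ?_ ?_
    · refine AddSubmonoid.closure_mono ?_ hq
      intro x hx
      simp only [Finset.coe_union, Finset.coe_image, Set.mem_union]
      exact Or.inl hx
    · apply AddSubmonoid.subset_closure
      simp only [Finset.coe_union, Set.mem_union]
      exact Or.inr hsS
  · intro p
    -- choose representations of n • p
    choose q s hsS heq using fun n : ℕ => hS (n • p)
    -- surjection φ : (T →₀ ℕ) →+ Q
    set φ : (↥T →₀ ℕ) →+ Q := Finsupp.liftAddHom (fun t => multiplesHom Q (t : Q)) with hφ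
    have hφsurj : Function.Surjective φ := by
      intro x
      have hx : x ∈ AddMonoidHom.mrange φ := by
        have : AddSubmonoid.closure (↑T : Set Q) ≤ AddMonoidHom.mrange φ := by
          apply AddSubmonoid.closure_le.mpr
          intro t ht
          refine ⟨Finsupp.single ⟨t, ht⟩ 1, ?_⟩
          simp [hφ]
        rw [hT] at this
        exact this trivial
      exact hx
    choose a ha using fun n : ℕ => hφsurj (q n)
    -- pigeonhole: an infinite fiber for s
    obtain ⟨y, hy⟩ := Finite.exists_infinite_fiber (fun n : ℕ => (⟨s n, hsS n⟩ : ↥S))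
    have hyinf : {n : ℕ | (⟨s n, hsS n⟩ : ↥S) = y}.Infinite := by
      rw [← Set.infinite_coe_iff]
      exact hy
    set pr : ℕ → Prop := fun n => (⟨s n, hsS n⟩ : ↥S) = y with hpr
    -- Dickson's lemma on the exponent vectors along the fiber
    have hpwo := Set.isPWO_of_wellQuasiOrderedLE (Set.univ : Set (↥T →₀ ℕ))
    obtain ⟨i, j, hij, hle⟩ := hpwo.exists_lt (f := fun k => a (Nat.nth pr k)) (fun k => Set.mem_univ _)
    set n := Nat.nth pr i with hn
    set m := Nat.nth pr j with hm
    have hnm : n < m := (Nat.nth_lt_nth hyinf).mpr hij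
    have hsnm : s n = s m := by
      have h1 : pr n := Nat.nth_mem_of_infinite hyinf i
      have h2 : pr m := Nat.nth_mem_of_infinite hyinf j
      have := h1.trans h2.symm
      exact congrArg Subtype.val this
    -- q m = q n + r
    have hdiff : a m = a n + (a m - a n) := (add_tsub_cancel_of_le hle).symm
    set r := φ (a m - a n) with hr
    have hqm : q m = q n + r := by
      rw [← ha m, ← ha n, hr, ← map_add, ← hdiff]
    refine ⟨m - n, Nat.sub_pos_of_lt hnm, r, ?_⟩
    have e1 : (m - n) • p + n • p = m • p := by
      rw [← add_nsmul]
      congr 1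
      omega
    have e2 : m • p = h r + n • p := by
      rw [heq m, heq n, hqm, map_add, hsnm]
      abel
    exact add_right_cancel (e1.trans e2).symm
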